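/- Let G be a finite group, H a p-selfcentralizing p-subgroup of G, and K a p-subgroup of G with H^g ≤ K for some g ∈ G. Then K is p-selfcentralizing, Z(H^g) = C_K(H^g), and Z(K) ≤ Z(H^g). -/

import Mathlib

open Subgroup

/-- Key lemma: if `Z ≤ C` is a `p`-group of index prime to `p` in `C`, normalized by `C`,
then every `p`-subgroup of `C` is contained in `Z`. -/
lemma key_lemma {G : Type*} [Group G] [Fintype G] {p : ℕ} (hp : p.Prime)
    (C Z P : Subgroup G) (hZC : Z ≤ C) (hPC : P ≤ C)
    (hZ : IsPGroup p Z) (hP : IsPGroup p P)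
    (hrel : ¬ p ∣ Z.relIndex C)
    (hnorm : ∀ c ∈ C, ∀ z ∈ Z, c * z * c⁻¹ ∈ Z) : P ≤ Z := by
  haveI : Fact p.Prime := ⟨hp⟩
  set Z' : Subgroup ↥C := Z.subgroupOf C with hZ'
  set P' : Subgroup ↥C := P.subgroupOf C with hP'
  have hZ'pg : IsPGroup p Z' := hZ.comap_subtype
  have hP'pg : IsPGroup p P' := hP.comap_subtype
  have hZ'idx : Z'.index = Z.relIndex C := rfl
  -- Z' is a Sylow p-subgroup of C
  obtain ⟨Q, hQ⟩ := hZ'pg.exists_le_sylow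
  have hQeq : (Q : Subgroup ↥C) = Z' := by
    have h1 : Z'.relIndex Q * (Q : Subgroup ↥C).index = Z'.index :=
      Subgroup.relIndex_mul_index hQ
    have h2 : Z'.relIndex Q ∣ Nat.card ↥(Q : Subgroup ↥C) :=
      Subgroup.index_dvd_card (Z'.subgroupOf (Q : Subgroup ↥C))
    obtain ⟨n, hn⟩ := IsPGroup.iff_card.mp Q.2
    rw [hn] at h2
    obtain ⟨k, hk, hkeq⟩ := (Nat.dvd_prime_pow hp).mp h2
    have hk0 : k = 0 := by
      by_contra hk0
      apply hrel
      rw [← hZ'idx, ← h1, hkeq]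
      exact Dvd.dvd.mul_right (dvd_pow_self p hk0) _
    have : Z'.relIndex Q = 1 := by rw [hkeq, hk0, pow_zero]
    exact le_antisymm (Subgroup.relIndex_eq_one.mp this) hQ
  -- Z' is normal in C
  haveI hQnorm : (Q : Subgroup ↥C).Normal := by
    rw [hQeq]
    constructor
    intro n hn c
    have h1 : (↑c : G) * ↑n * (↑c)⁻¹ ∈ Z := hnorm ↑c c.2 ↑n hn
    simpa [hZ', Subgroup.mem_subgroupOf] using h1
  -- P' is contained in a Sylow, which equals Q by normality
  obtain ⟨R, hR⟩ := hP'pg.exists_le_sylow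
  have hRQ : R = Q := by
    obtain ⟨c, hc⟩ := MulAction.exists_smul_eq ↥C Q R
    rw [← hc, Sylow.smul_eq_of_normal]
  intro x hx
  have hxC : x ∈ C := hPC hx
  have : (⟨x, hxC⟩ : ↥C) ∈ Z' := hQeq ▸ (hRQ ▸ hR (by simpa [hP', Subgroup.mem_subgroupOf] using hx))
  simpa [hZ', Subgroup.mem_subgroupOf] using this

lemma centralizer_map_equiv {G : Type*} [Group G] (e : G ≃* G) (s : Set G) :
    Subgroup.centralizer (e '' s) = (Subgroup.centralizer s).map e.toMonoidHom := by
  ext x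
  rw [Subgroup.mem_map]
  constructor
  · intro hx
    refine ⟨e.symm x, ?_, by simp⟩
    rw [Subgroup.mem_centralizer_iff]
    intro h hs
    have := (Subgroup.mem_centralizer_iff.mp hx) (e h) ⟨h, hs, rfl⟩
    apply e.injective
    simpa using this
  · rintro ⟨y, hy, rfl⟩
    rw [Subgroup.mem_centralizer_iff]
    rintro _ ⟨h, hs, rfl⟩
    have := (Subgroup.mem_centralizer_iff.mp hy) h hs
    show e h * e y = e y * e h
    rw [← map_mul, ← map_mul, this]

lemma relIndex_map_equiv {G : Type*} [Group G] (e : G ≃* G) (A B : Subgroup G) :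
    (A.map e.toMonoidHom).relIndex (B.map e.toMonoidHom) = A.relIndex B := by
  rw [Subgroup.map_equiv_eq_comap_symm' e A, Subgroup.relIndex_comap]
  congr 1
  rw [Subgroup.map_map]
  convert Subgroup.map_id B
  ext x
  simp

/-- The conjugate subgroup `H^g = g⁻¹ H g`. -/
def conjSub {G : Type*} [Group G] (g : G) (H : Subgroup G) : Subgroup G :=
  H.map (MulAut.conj g⁻¹).toMonoidHom

/-- A `p`-subgroup `H ≤ G` is `p`-selfcentralizing if `Z(H) = C_H(H)` is a Sylow
`p`-subgroup of `C_G(H)`: i.e. it is a `p`-group of index prime to `p` in `C_G(H)`. -/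
def IsPSelfCentralizing (p : ℕ) {G : Type*} [Group G] (H : Subgroup G) : Prop :=
  IsPGroup p ↥(H ⊓ Subgroup.centralizer (H : Set G)) ∧
  ¬ p ∣ (H ⊓ Subgroup.centralizer (H : Set G)).relIndex (Subgroup.centralizer (H : Set G))

theorem stmt_17 {G : Type*} [Group G] [Fintype G] (p : ℕ) (hp : p.Prime)
    (H K : Subgroup G) (hH : IsPGroup p H) (hK : IsPGroup p K)
    (hsc : IsPSelfCentralizing p H) (g : G) (hg : conjSub g H ≤ K) :
    IsPSelfCentralizing p K ∧
    (conjSub g H ⊓ Subgroup.centralizer ((conjSub g H : Subgroup G) : Set G)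
      = K ⊓ Subgroup.centralizer ((conjSub g H : Subgroup G) : Set G)) ∧
    (K ⊓ Subgroup.centralizer (K : Set G) ≤
      conjSub g H ⊓ Subgroup.centralizer ((conjSub g H : Subgroup G) : Set G)) := by
  classical
  haveI : Fact p.Prime := ⟨hp⟩
  set e : G ≃* G := MulAut.conj g⁻¹ with hedef
  set H' : Subgroup G := conjSub g H with hH'def
  set C' : Subgroup G := Subgroup.centralizer (H' : Set G) with hC'def
  set Z' : Subgroup G := H' ⊓ C' with hZ'def
  -- transport selfcentralizing property along conjugation
  have hH'map : H' = H.map e.toMonoidHom := rfl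
  have hcent : C' = (Subgroup.centralizer (H : Set G)).map e.toMonoidHom := by
    rw [hC'def, hH'map, ← centralizer_map_equiv e (H : Set G)]
    congr 1
  have hZ'eq : Z' = (H ⊓ Subgroup.centralizer (H : Set G)).map e.toMonoidHom := by
    rw [hZ'def, hH'map, hcent, Subgroup.map_inf _ _ _ e.injective]
  have hZ'pg : IsPGroup p Z' := by rw [hZ'eq]; exact hsc.1.map _
  have hrel' : ¬ p ∣ Z'.relIndex C' := by
    rw [hZ'eq, hcent, relIndex_map_equiv]
    exact hsc.2
  -- Z' is centralized (hence normalized) by C'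
  have hZ'H' : Z' ≤ H' := inf_le_left
  have hnorm : ∀ c ∈ C', ∀ z ∈ Z', c * z * c⁻¹ ∈ Z' := by
    intro c hc z hz
    have hcomm : z * c = c * z := Subgroup.mem_centralizer_iff.mp hc z (hZ'H' hz)
    have h2 : c * z * c⁻¹ = z := by
      rw [← hcomm, mul_inv_cancel_right]
    rwa [h2]
  -- Part 2
  have hmain : K ⊓ C' ≤ Z' :=
    key_lemma hp C' Z' (K ⊓ C') inf_le_right inf_le_right hZ'pg hK.to_inf_left hrel' hnorm
  have heq2 : Z' = K ⊓ C' := le_antisymm (inf_le_inf_right C' hg) hmain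
  -- Part 3
  have hcentK : Subgroup.centralizer (K : Set G) ≤ C' :=
    Subgroup.centralizer_le (SetLike.coe_subset_coe.mpr hg)
  have hpart3 : K ⊓ Subgroup.centralizer (K : Set G) ≤ Z' := by
    rw [heq2]
    exact inf_le_inf_left K hcentK
  refine ⟨⟨hK.to_inf_left, ?_⟩, heq2, hpart3⟩
  -- Part 1 : Z(K) is a Sylow p-subgroup of C_G(K)
  set CK : Subgroup G := Subgroup.centralizer (K : Set G) with hCKdef
  set ZK : Subgroup G := K ⊓ CK with hZKdef
  have hZKpg : IsPGroup p ZK := hK.to_inf_left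
  obtain ⟨R, hR⟩ := (hZKpg.comap_subtype (K := CK)).exists_le_sylow
  set P : Subgroup G := (R : Subgroup ↥CK).map CK.subtype with hPdef
  have hPpg : IsPGroup p P := R.2.map _
  have hPCK : P ≤ CK := Subgroup.map_subtype_le _
  have hPZ' : P ≤ Z' :=
    key_lemma hp C' Z' P inf_le_right (le_trans hPCK hcentK) hZ'pg hPpg hrel' hnorm
  have hPZK : P ≤ ZK := le_inf (le_trans hPZ' (le_trans inf_le_left hg)) hPCK
  have hZKP : ZK ≤ P := by
    intro x hx
    exact ⟨⟨x, hx.2⟩, hR (by simpa [Subgroup.mem_subgroupOf] using hx), rfl⟩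
  have hReq : ZK.subgroupOf CK = (R : Subgroup ↥CK) := by
    apply Subgroup.map_injective CK.subtype_injective
    rw [Subgroup.subgroupOf_map_subtype, ← hPdef]
    rw [inf_eq_left.mpr inf_le_right]
    exact le_antisymm hZKP hPZK
  show ¬ p ∣ ZK.relIndex CK
  have hrelidx : ZK.relIndex CK = (R : Subgroup ↥CK).index := by
    rw [Subgroup.relIndex, hReq]
  rw [hrelidx]
  haveI : (R : Subgroup ↥CK).FiniteIndex := ⟨Subgroup.index_ne_zero_of_finite⟩
  exact R.not_dvd_index
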